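/- arXiv:1606.04690 — 2 statements merged into one kernel-verified Lean document; each statement's English description precedes it below -/
import Mathlib

section
/- Let α ≥ 1 and β ≥ (1+√5)/2 be real numbers and let m be a nonnegative integer. Then for every z in the open unit disk 𝔻 with z ≠ 0, Re( (𝔼_{α,β})_m(z) / 𝔼_{α,β}(z) ) ≥ β²/(β² + β + 1). -/
/-- The normalized Mittag-Leffler function
`𝔼_{α,β}(z) = z + ∑_{n=1}^∞ (Γ(β)/Γ(αn+β)) z^{n+1}`. -/
noncomputable def normalizedMittagLeffler (α β : ℝ) (z : ℂ) : ℂ :=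
  z + ∑' n : ℕ, ((Real.Gamma β / Real.Gamma (α * (n + 1) + β) : ℝ) : ℂ) * z ^ (n + 2)

/-- The `m`-th partial sum `(𝔼_{α,β})_m(z) = z + ∑_{n=1}^m (Γ(β)/Γ(αn+β)) z^{n+1}`. -/
noncomputable def normalizedMittagLefflerPartial (α β : ℝ) (m : ℕ) (z : ℂ) : ℂ :=
  z + ∑ n ∈ Finset.Icc 1 m, ((Real.Gamma β / Real.Gamma (α * n + β) : ℝ) : ℂ) * z ^ (n + 1)

set_option maxHeartbeats 1000000

private lemma re_nonneg_of_norm' (w : ℂ) (h : ‖1 - w‖ ≤ ‖1 + w‖) : 0 ≤ w.re := by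
  have h2 : ‖1 - w‖ ^ 2 ≤ ‖1 + w‖ ^ 2 := pow_le_pow_left₀ (norm_nonneg _) h 2
  rw [Complex.sq_norm, Complex.sq_norm] at h2
  simp [Complex.normSq_apply, Complex.add_re, Complex.sub_re, Complex.add_im, Complex.sub_im] at h2
  nlinarith [h2]



private lemma gamma_prod_le (β : ℝ) (hβ1 : 1 ≤ β) (n : ℕ) :
    β * (β + 1) ^ n * Real.Gamma β ≤ Real.Gamma (β + (n + 1)) := by
  induction n with
  | zero =>
    have : Real.Gamma (β + 1) = β * Real.Gamma β := Real.Gamma_add_one (by linarith)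
    simp [this]
  | succ n ih =>
    have hn : (0:ℝ) ≤ (n:ℝ) := Nat.cast_nonneg n
    have hx : (0:ℝ) < β + ((n:ℝ) + 1) := by linarith
    have h1 : Real.Gamma (β + ((n:ℝ) + 1 + 1)) = (β + ((n:ℝ) + 1)) * Real.Gamma (β + ((n:ℝ) + 1)) := by
      have h := Real.Gamma_add_one (s := β + ((n:ℝ) + 1)) (ne_of_gt hx)
      rw [← h]; ring_nf
    have hpos : 0 < Real.Gamma (β + ((n:ℝ) + 1)) := Real.Gamma_pos_of_pos hx
    have hG : 0 < Real.Gamma β := Real.Gamma_pos_of_pos (by linarith)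
    have hpow : (0:ℝ) < (β + 1) ^ n := pow_pos (by linarith) n
    have h2 : (β + 1) * (β * (β + 1) ^ n * Real.Gamma β) ≤ (β + ((n:ℝ) + 1)) * Real.Gamma (β + ((n:ℝ) + 1)) := by
      have hb : β + 1 ≤ β + ((n:ℝ) + 1) := by linarith
      nlinarith
    calc β * (β + 1) ^ (n + 1) * Real.Gamma β
        = (β + 1) * (β * (β + 1) ^ n * Real.Gamma β) := by ring
      _ ≤ (β + ((n:ℝ) + 1)) * Real.Gamma (β + ((n:ℝ) + 1)) := h2
      _ = Real.Gamma (β + ((n:ℝ) + 1 + 1)) := h1.symm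
      _ = Real.Gamma (β + (((n+1):ℕ) + 1)) := by push_cast; ring_nf

private lemma coeff_le (α β : ℝ) (hα : 1 ≤ α) (hβ1 : 1 ≤ β) (n : ℕ) :
    Real.Gamma β / Real.Gamma (α * (n + 1) + β) ≤ 1 / (β * (β + 1) ^ n) := by
  have hn : (0:ℝ) ≤ (n:ℝ) := Nat.cast_nonneg n
  have hG : 0 < Real.Gamma β := Real.Gamma_pos_of_pos (by linarith)
  have hmem : (β + ((n:ℝ) + 1) : ℝ) ∈ Set.Ici (2:ℝ) := by
    simp only [Set.mem_Ici]; linarith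
  have hle : (β + ((n:ℝ) + 1) : ℝ) ≤ α * ((n:ℝ) + 1) + β := by nlinarith
  have hmem2 : (α * ((n:ℝ) + 1) + β : ℝ) ∈ Set.Ici (2:ℝ) := by
    simp only [Set.mem_Ici]
    simp only [Set.mem_Ici] at hmem
    linarith
  have hmono : Real.Gamma (β + ((n:ℝ) + 1)) ≤ Real.Gamma (α * ((n:ℝ) + 1) + β) :=
    Real.Gamma_strictMonoOn_Ici.monotoneOn hmem hmem2 hle
  have hprod := gamma_prod_le β hβ1 n
  have hden : 0 < β * (β + 1) ^ n := mul_pos (by linarith) (pow_pos (by linarith) n)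
  have hden2 : 0 < Real.Gamma (α * ((n:ℝ) + 1) + β) := Real.Gamma_pos_of_pos (by nlinarith)
  rw [div_le_div_iff₀ hden2 hden]
  nlinarith

theorem re_partial_div_mittagLeffler_ge (α β : ℝ) (hα : 1 ≤ α)
    (hβ : (1 + Real.sqrt 5) / 2 ≤ β) (m : ℕ) (z : ℂ) (hz : ‖z‖ < 1) (hz0 : z ≠ 0) :
    β ^ 2 / (β ^ 2 + β + 1) ≤
      (normalizedMittagLefflerPartial α β m z / normalizedMittagLeffler α β z).re := by
  have h5 : Real.sqrt 5 ^ 2 = 5 := Real.sq_sqrt (by norm_num)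
  have h5n : (0:ℝ) ≤ Real.sqrt 5 := Real.sqrt_nonneg 5
  have h52 : (2:ℝ) ≤ Real.sqrt 5 := by nlinarith
  have hβ1 : 1 ≤ β := by linarith
  have hφ : β + 1 ≤ β ^ 2 := by nlinarith
  have hcoeff := coeff_le α β hα hβ1
  unfold normalizedMittagLefflerPartial normalizedMittagLeffler
  set r := ‖z‖ with hr
  have hr0 : 0 < r := norm_pos_iff.mpr hz0
  have hβ0 : (0:ℝ) < β := by linarith
  -- coefficient positivity
  have hGpos : ∀ n : ℕ, 0 < Real.Gamma β / Real.Gamma (α * ((n:ℝ) + 1) + β) := by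
    intro n
    have hn : (0:ℝ) ≤ (n:ℝ) := Nat.cast_nonneg n
    exact div_pos (Real.Gamma_pos_of_pos hβ0) (Real.Gamma_pos_of_pos (by nlinarith))
  set f : ℕ → ℂ := fun n => ((Real.Gamma β / Real.Gamma (α * (n + 1) + β) : ℝ) : ℂ) * z ^ (n + 2) with hf
  set g : ℕ → ℝ := fun n => (Real.Gamma β / Real.Gamma (α * (n + 1) + β)) * r ^ (n + 2) with hg
  have hgnorm : ∀ n, ‖f n‖ = g n := by
    intro n
    simp only [hf, hg, norm_mul, Complex.norm_real, norm_pow, Real.norm_eq_abs]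
    rw [abs_of_pos (hGpos n)]
  have hg0 : ∀ n, 0 ≤ g n := fun n => by
    have := hGpos n
    have : (0:ℝ) ≤ r ^ (n+2) := by positivity
    positivity
  set b : ℕ → ℝ := fun n => (r^2 / β) * (1/(β+1))^n with hb
  have hgb : ∀ n, g n ≤ b n := by
    intro n
    have h1 : r ^ (n+2) ≤ r^2 := by
      calc r ^ (n+2) = r^n * r^2 := by ring
        _ ≤ 1 * r^2 := by
            have : r ^ n ≤ 1 := pow_le_one₀ (norm_nonneg z) (le_of_lt hz)
            nlinarith [sq_nonneg r]
        _ = r^2 := by ring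
    have h2 := hcoeff n
    have hden : (0:ℝ) < β * (β+1)^n := by positivity
    have h3 : (0:ℝ) < Real.Gamma β / Real.Gamma (α * ((n:ℝ) + 1) + β) := hGpos n
    calc g n ≤ (1 / (β * (β + 1) ^ n)) * r ^ (n+2) := by
          exact mul_le_mul_of_nonneg_right h2 (by positivity)
      _ ≤ (1 / (β * (β + 1) ^ n)) * r^2 := by
          exact mul_le_mul_of_nonneg_left h1 (by positivity)
      _ = b n := by
          simp only [hb, div_pow, one_pow]
          field_simp
          try ring
  have hgeo : Summable (fun n : ℕ => (1/(β+1))^n) :=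
    summable_geometric_of_lt_one (by positivity) (by
      rw [div_lt_one (by linarith)]; linarith)
  have hsum_b : Summable b := hgeo.mul_left _
  have hsum_g : Summable g := Summable.of_nonneg_of_le hg0 hgb hsum_b
  have hsum_f : Summable f := by
    apply Summable.of_norm
    simpa only [hgnorm] using hsum_g
  set K := ∑' n, g n with hKdef
  have hK : K ≤ r^2 * ((β+1)/β^2) := by
    have h1 : K ≤ ∑' n, b n := hsum_g.tsum_le_tsum hgb hsum_b
    have h2 : ∑' n, b n = (r^2/β) * (1 - 1/(β+1))⁻¹ := by
      rw [hb, tsum_mul_left, tsum_geometric_of_lt_one (by positivity)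
        (by rw [div_lt_one (by linarith)]; linarith)]
    have h3 : (r^2/β) * (1 - 1/(β+1))⁻¹ = r^2 * ((β+1)/β^2) := by
      have : (1 : ℝ) - 1/(β+1) = β/(β+1) := by field_simp; ring
      rw [this]
      field_simp
    rw [h2, h3] at h1
    exact h1
  have hKr2 : K ≤ r^2 := by
    have : (β+1)/β^2 ≤ 1 := by
      rw [div_le_one (by positivity)]; exact hφ
    calc K ≤ r^2 * ((β+1)/β^2) := hK
      _ ≤ r^2 * 1 := mul_le_mul_of_nonneg_left this (by positivity)
      _ = r^2 := by ring
  have hK0 : 0 ≤ K := tsum_nonneg hg0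
  -- identify partial sum with range sum of f
  have hsP : ∑ n ∈ Finset.Icc 1 m, ((Real.Gamma β / Real.Gamma (α * n + β) : ℝ) : ℂ) * z ^ (n + 1)
      = ∑ n ∈ Finset.range m, f n := by
    rw [← Finset.Ico_add_one_right_eq_Icc, Finset.sum_Ico_eq_sum_range, Nat.add_sub_cancel]
    apply Finset.sum_congr rfl
    intro i _
    have h1 : ((1 + i : ℕ) : ℝ) = (i : ℝ) + 1 := by push_cast; ring
    have h2 : 1 + i + 1 = i + 2 := by omega
    rw [h1, h2]
  set E : ℂ := z + ∑' n, f n with hE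
  set s : ℂ := z + ∑ n ∈ Finset.range m, f n with hs
  rw [hsP]
  -- tail
  have htail := hsum_f.sum_add_tsum_nat_add m
  have hR : E - s = ∑' n, f (n + m) := by
    rw [hE, hs, ← htail]; ring
  have hsumtail : Summable (fun n => g (n + m)) := by
    exact (summable_nat_add_iff m).mpr hsum_g
  have hsumtail_f : Summable (fun n => ‖f (n + m)‖) := by
    simpa only [hgnorm] using hsumtail
  set T := ∑' n, g (n + m) with hT
  set P := ∑ n ∈ Finset.range m, g n with hP
  have hPT : P + T = K := hsum_g.sum_add_tsum_nat_add m
  have hT0 : 0 ≤ T := tsum_nonneg (fun n => hg0 _)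
  have hP0 : 0 ≤ P := Finset.sum_nonneg (fun n _ => hg0 n)
  have hRT : ‖E - s‖ ≤ T := by
    rw [hR]
    calc ‖∑' n, f (n + m)‖ ≤ ∑' n, ‖f (n + m)‖ := norm_tsum_le_tsum_norm hsumtail_f
      _ = T := by simp only [hgnorm, hT]
  have hsz : ‖s - z‖ ≤ P := by
    rw [hs]
    simp only [add_sub_cancel_left]
    calc ‖∑ n ∈ Finset.range m, f n‖ ≤ ∑ n ∈ Finset.range m, ‖f n‖ := norm_sum_le _ _
      _ = P := by simp only [hgnorm, hP]
  have hEnorm : r - K ≤ ‖E‖ := by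
    have h1 : ‖∑' n, f n‖ ≤ K := by
      calc ‖∑' n, f n‖ ≤ ∑' n, ‖f n‖ := norm_tsum_le_tsum_norm (by simpa only [hgnorm] using hsum_g)
        _ = K := by simp only [hgnorm, hKdef]
    have h2 : ‖z‖ ≤ ‖E‖ + ‖∑' n, f n‖ := by
      calc ‖z‖ = ‖E - ∑' n, f n‖ := by
            have : E - ∑' n, f n = z := by rw [hE]; ring
            rw [this]
        _ ≤ ‖E‖ + ‖∑' n, f n‖ := norm_sub_le _ _
    linarith
  have hE0 : E ≠ 0 := by
    intro h
    rw [h, norm_zero] at hEnorm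
    nlinarith
  -- μ and key inequality
  set μ : ℝ := (β^2+β+1)/(β+1) with hμ
  have hμ1 : μ - 1 = β^2/(β+1) := by rw [hμ]; field_simp; ring
  have h1μ : 1 ≤ μ - 1 := by
    rw [hμ1, le_div_iff₀ (by linarith)]; linarith
  have hkey : P + (μ-1)*T ≤ r := by
    have step1 : P + (μ-1)*T ≤ (μ-1)*(P+T) := by nlinarith
    have step3 : (μ-1)*(r^2*((β+1)/β^2)) = r^2 := by
      rw [hμ1]; field_simp
    have step2 : (μ-1)*K ≤ r^2 := by
      calc (μ-1)*K ≤ (μ-1)*(r^2*((β+1)/β^2)) := mul_le_mul_of_nonneg_left hK (by linarith)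
        _ = r^2 := step3
    have step4 : r^2 ≤ r := by nlinarith
    rw [hPT] at step1
    linarith
  -- the Herglotz trick
  set w : ℂ := (μ:ℂ) * (s/E) - ((μ:ℂ) - 1) with hw
  have h1w : 1 - w = (μ:ℂ) * (E - s) / E := by
    rw [hw]; field_simp; ring
  have h2w : 1 + w = (2*s - ((μ:ℂ)-2)*(E-s)) / E := by
    rw [hw]; field_simp; ring
  have hsnorm : r - P ≤ ‖s‖ := by
    have : ‖z‖ ≤ ‖s‖ + ‖s - z‖ := by
      calc ‖z‖ = ‖s - (s - z)‖ := by
            have : s - (s - z) = z := by ring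
            rw [this]
        _ ≤ ‖s‖ + ‖s - z‖ := norm_sub_le _ _
    linarith
  have hnum : ‖(μ:ℂ) * (E - s)‖ ≤ ‖2*s - ((μ:ℂ)-2)*(E-s)‖ := by
    have hl : ‖(μ:ℂ) * (E - s)‖ = μ * ‖E - s‖ := by
      rw [norm_mul, Complex.norm_real, Real.norm_eq_abs, abs_of_pos (by linarith : (0:ℝ) < μ)]
    have hr2 : 2*‖s‖ - (μ-2) * ‖E - s‖ ≤ ‖2*s - ((μ:ℂ)-2)*(E-s)‖ := by
      have e1 : ‖((μ:ℂ)-2)*(E-s)‖ = (μ-2) * ‖E - s‖ := by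
        have : ((μ:ℂ) - 2) = ((μ - 2 : ℝ) : ℂ) := by push_cast; ring
        rw [this, norm_mul, Complex.norm_real, Real.norm_eq_abs,
          abs_of_nonneg (by linarith : (0:ℝ) ≤ μ - 2)]
      have e2 : ‖2*s‖ = 2 * ‖s‖ := by
        rw [norm_mul]; norm_num
      calc 2*‖s‖ - (μ-2) * ‖E - s‖ = ‖2*s‖ - ‖((μ:ℂ)-2)*(E-s)‖ := by rw [e1, e2]
        _ ≤ ‖2*s - ((μ:ℂ)-2)*(E-s)‖ := norm_sub_norm_le _ _
    rw [hl]
    nlinarith [norm_nonneg (E - s)]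
  have hnormw : ‖1 - w‖ ≤ ‖1 + w‖ := by
    rw [h1w, h2w, norm_div, norm_div]
    have hEp : 0 < ‖E‖ := norm_pos_iff.mpr hE0
    exact div_le_div_of_nonneg_right hnum hEp.le
  have hwre : 0 ≤ w.re := re_nonneg_of_norm' w hnormw
  have hwre2 : w.re = μ * (s/E).re - (μ - 1) := by
    rw [hw]
    simp [Complex.sub_re, Complex.mul_re, Complex.ofReal_re, Complex.ofReal_im, Complex.one_re]
  have hμpos : (0:ℝ) < μ := by linarith
  have hfinal : (μ-1)/μ ≤ (s/E).re := by
    rw [div_le_iff₀ hμpos]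
    nlinarith
  have hq : (0:ℝ) < β^2+β+1 := by positivity
  have heq : (μ-1)/μ = β^2/(β^2+β+1) := by
    rw [hμ1, hμ, div_div_div_cancel_right₀]
    exact ne_of_gt (by linarith)
  linarith [heq ▸ hfinal]
end

section
/- For every z in the open unit disk 𝔻 with z ≠ 0, Re( √z / sinh(√z) ) ≥ 4/7, where √z denotes the principal square root of z. -/
/-- Cubic error bound for `sinh` near zero: `|sinh w - w| ≤ (2/9)|w|³` when `|w| ≤ 1`. -/
lemma sinh_sub_self_bound {w : ℂ} (hw : ‖w‖ ≤ 1) :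
    ‖Complex.sinh w - w‖ ≤ 2 / 9 * ‖w‖ ^ 3 := by
  have hw' : ‖-w‖ ≤ 1 := by rwa [norm_neg]
  have h1 := Complex.exp_bound hw (by norm_num : 0 < 3)
  have h2 := Complex.exp_bound hw' (by norm_num : 0 < 3)
  have key : Complex.sinh w - w =
      ((Complex.exp w - ∑ m ∈ Finset.range 3, w ^ m / m.factorial)
        - (Complex.exp (-w) - ∑ m ∈ Finset.range 3, (-w) ^ m / m.factorial)) / 2 := by
    simp only [Complex.sinh, Finset.sum_range_succ, Finset.sum_range_zero,
      Nat.factorial]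
    push_cast
    ring
  rw [key]
  have h3 : ‖(Complex.exp w - ∑ m ∈ Finset.range 3, w ^ m / m.factorial)
        - (Complex.exp (-w) - ∑ m ∈ Finset.range 3, (-w) ^ m / m.factorial)‖
      ≤ 2 / 9 * ‖w‖ ^ 3 + 2 / 9 * ‖w‖ ^ 3 := by
    refine (norm_sub_le _ _).trans ?_
    have e1 : ((3 : ℕ).succ : ℝ) * (((3 : ℕ).factorial : ℝ) * (3 : ℕ))⁻¹ = 2 / 9 := by
      norm_num [Nat.factorial]
    rw [e1] at h1 h2
    rw [norm_neg] at h2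
    linarith [h1, h2]
  rw [norm_div]
  simp only [RCLike.norm_ofNat]
  linarith [h3]

theorem re_sqrt_div_sinh_sqrt_ge (z : ℂ) (hz : ‖z‖ < 1) (hz0 : z ≠ 0) :
    (4 / 7 : ℝ) ≤ (z ^ (1 / 2 : ℂ) / Complex.sinh (z ^ (1 / 2 : ℂ))).re := by
  set w := z ^ (1 / 2 : ℂ) with hwdef
  have hw0 : w ≠ 0 := by
    rw [hwdef, Ne, Complex.cpow_eq_zero_iff]
    simp [hz0]
  have hw : ‖w‖ < 1 := by
    rw [hwdef, Complex.norm_cpow_of_ne_zero hz0]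
    simp only [Complex.div_ofNat_im, Complex.one_im, Complex.div_ofNat_re, Complex.one_re]
    norm_num
    exact Real.rpow_lt_one (norm_nonneg z) hz (by norm_num)
  set g : ℂ := Complex.sinh w / w - 1 with hgdef
  have hsw : Complex.sinh w = w * (1 + g) := by
    rw [hgdef]
    field_simp
    ring
  have hg : ‖g‖ ≤ 2 / 9 := by
    have hEq : g = (Complex.sinh w - w) / w := by
      rw [hgdef]; field_simp
    have h1 : ‖Complex.sinh w - w‖ ≤ 2 / 9 * ‖w‖ ^ 3 :=
      sinh_sub_self_bound hw.le
    have hwpos : 0 < ‖w‖ := norm_pos_iff.mpr hw0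
    have hp : ‖w‖ ^ 3 ≤ ‖w‖ ^ 1 :=
      pow_le_pow_of_le_one (norm_nonneg w) hw.le (by norm_num)
    rw [pow_one] at hp
    rw [hEq, norm_div, div_le_iff₀ hwpos]
    linarith
  have h1g : (1 : ℂ) + g ≠ 0 := by
    intro h
    have hgm : g = -1 := by linear_combination h
    rw [hgm] at hg
    norm_num at hg
  have hdiv : w / Complex.sinh w = (1 + g)⁻¹ := by
    rw [hsw]
    rw [div_mul_cancel_left₀ hw0]
  rw [hdiv, Complex.inv_re]
  have hre : |g.re| ≤ 2 / 9 := (Complex.abs_re_le_norm g).trans hg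
  have hsq : g.re * g.re + g.im * g.im ≤ (2 / 9) ^ 2 := by
    have := Complex.sq_norm g
    rw [Complex.normSq_apply] at this
    nlinarith [norm_nonneg g]
  have hnpos : 0 < Complex.normSq (1 + g) := by
    rwa [Complex.normSq_pos]
  rw [le_div_iff₀ hnpos, Complex.normSq_apply]
  simp only [Complex.add_re, Complex.add_im, Complex.one_re, Complex.one_im]
  have hre1 : -(2 / 9 : ℝ) ≤ g.re := by linarith [neg_abs_le g.re]
  nlinarith [hsq, hre1]
end
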